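/- arXiv:2203.13284 — 2 statements merged into one kernel-verified Lean document; each statement's English description precedes it below -/
import Mathlib

section
/- Let K be a symmetric positive-semidefinite kernel on a set X, let D = {x_1,...,x_N} ⊆ X and S = {s_1,...,s_n} ⊆ X. If the n×n kernel matrix K_S with entries K(s_i,s_j) satisfies ‖K_S‖_F > 0, then the radial SKD R(S) = ‖K‖_F² − (Σ_{i=1}^N Σ_{j=1}^n K²(x_i,s_j))² / ‖K_S‖_F² is nonnegative. -/
open Finset
open scoped MatrixOrder

lemma comm4 {m : ℕ} (f : Fin m → Fin m → Fin m → Fin m → ℝ) :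
    ∑ i, ∑ j, ∑ k, ∑ l, f i j k l = ∑ k, ∑ l, ∑ i, ∑ j, f i j k l := by
  calc ∑ i, ∑ j, ∑ k, ∑ l, f i j k l
      = ∑ i, ∑ k, ∑ j, ∑ l, f i j k l :=
        Finset.sum_congr rfl fun i _ => Finset.sum_comm
    _ = ∑ i, ∑ k, ∑ l, ∑ j, f i j k l :=
        Finset.sum_congr rfl fun i _ => Finset.sum_congr rfl fun k _ => Finset.sum_comm
    _ = ∑ k, ∑ i, ∑ l, ∑ j, f i j k l := Finset.sum_comm
    _ = ∑ k, ∑ l, ∑ i, ∑ j, f i j k l :=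
        Finset.sum_congr rfl fun k _ => Finset.sum_comm

/-- The pointwise square of a PSD kernel is PSD (Schur product, via matrix sqrt). -/
lemma sq_kernel_psd {X : Type*} (K : X → X → ℝ)
    (hsymm : ∀ x y, K x y = K y x)
    (hpsd : ∀ (m : ℕ) (z : Fin m → X) (c : Fin m → ℝ),
      0 ≤ ∑ i, ∑ j, c i * c j * K (z i) (z j))
    (m : ℕ) (z : Fin m → X) (c : Fin m → ℝ) :
    0 ≤ ∑ i, ∑ j, c i * c j * (K (z i) (z j))^2 := by
  set M : Matrix (Fin m) (Fin m) ℝ := Matrix.of fun i j => K (z i) (z j) with hM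
  have hMpsd : M.PosSemidef := by
    refine Matrix.PosSemidef.of_dotProduct_mulVec_nonneg ?_ ?_
    · ext i j
      simp [M, Matrix.conjTranspose, hsymm (z i) (z j)]
    · intro v
      refine le_trans (hpsd m z v) (le_of_eq ?_)
      simp only [dotProduct, Matrix.mulVec, Finset.mul_sum]
      refine Finset.sum_congr rfl fun i _ => Finset.sum_congr rfl fun j _ => ?_
      simp [M]; ring
  set S := CFC.sqrt M with hS
  have hSsym : ∀ i j, S i j = S j i := by
    intro i j
    have h := (Matrix.nonneg_iff_posSemidef.mp (CFC.sqrt_nonneg M)).1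
    have := congrFun (congrFun h.symm i) j
    simpa [Matrix.conjTranspose] using this
  have hrep : ∀ i j, K (z i) (z j) = ∑ k, S k i * S k j := by
    intro i j
    have h := CFC.sqrt_mul_sqrt_self M hMpsd.nonneg
    have := congrFun (congrFun h i) j
    rw [Matrix.mul_apply] at this
    calc K (z i) (z j) = M i j := rfl
      _ = ∑ k, S i k * S k j := this.symm
      _ = ∑ k, S k i * S k j := by
          exact Finset.sum_congr rfl fun k _ => by rw [hSsym i k]
  calc ∑ i, ∑ j, c i * c j * (K (z i) (z j))^2
      = ∑ i, ∑ j, ∑ k, ∑ l, (c i * (S k i * S l i)) * (c j * (S k j * S l j)) := by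
        refine Finset.sum_congr rfl fun i _ => Finset.sum_congr rfl fun j _ => ?_
        rw [hrep i j, sq, Finset.sum_mul_sum, Finset.mul_sum]
        exact Finset.sum_congr rfl fun k _ => by
          rw [Finset.mul_sum]
          exact Finset.sum_congr rfl fun l _ => by ring
    _ = ∑ k, ∑ l, ∑ i, ∑ j, (c i * (S k i * S l i)) * (c j * (S k j * S l j)) :=
        comm4 _
    _ = ∑ k, ∑ l, (∑ i, c i * (S k i * S l i))^2 := by
        refine Finset.sum_congr rfl fun k _ => Finset.sum_congr rfl fun l _ => ?_
        rw [sq, Finset.sum_mul_sum]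
    _ ≥ 0 := by positivity

/-- nonnegativity of the radial SKD. -/
theorem radial_SKD_nonneg {X : Type*} (K : X → X → ℝ) (N n : ℕ)
    (hsymm : ∀ x y, K x y = K y x)
    (hpsd : ∀ (m : ℕ) (z : Fin m → X) (c : Fin m → ℝ),
      0 ≤ ∑ i, ∑ j, c i * c j * K (z i) (z j))
    (x : Fin N → X) (s : Fin n → X)
    (hKS : 0 < Real.sqrt (∑ i, ∑ j, (K (s i) (s j))^2)) :
    0 ≤ (∑ i, ∑ j, (K (x i) (x j))^2) -
      (∑ i : Fin N, ∑ j : Fin n, (K (x i) (s j))^2)^2 /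
        (∑ i, ∑ j, (K (s i) (s j))^2) := by
  set a : ℝ := ∑ i, ∑ j, (K (x i) (x j))^2 with ha
  set b : ℝ := ∑ i : Fin N, ∑ j : Fin n, (K (x i) (s j))^2 with hb
  set c : ℝ := ∑ i, ∑ j, (K (s i) (s j))^2 with hc
  have hcpos : 0 < c := by
    by_contra h
    push_neg at h
    rw [hc] at h
    have : Real.sqrt (∑ i, ∑ j, (K (s i) (s j))^2) = 0 :=
      Real.sqrt_eq_zero_of_nonpos h
    rw [this] at hKS; exact lt_irrefl 0 hKS
  set t : ℝ := -(b / c) with ht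
  set z : Fin (N + n) → X := Fin.append x s with hz
  set w : Fin (N + n) → ℝ := Fin.append (fun _ => (1 : ℝ)) (fun _ => t) with hw
  have hQ := sq_kernel_psd K hsymm hpsd (N + n) z w
  have hsplit : ∑ i, ∑ j, w i * w j * (K (z i) (z j))^2 = a + t * b + (t * b + t * t * c) := by
    rw [Fin.sum_univ_add]
    congr 1
    · calc ∑ i : Fin N, ∑ j, w (Fin.castAdd n i) * w j * (K (z (Fin.castAdd n i)) (z j))^2
          = ∑ i : Fin N, ((∑ j : Fin N, (K (x i) (x j))^2)
              + ∑ j : Fin n, t * (K (x i) (s j))^2) := by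
            refine Finset.sum_congr rfl fun i _ => ?_
            rw [Fin.sum_univ_add]
            congr 1
            · simp [hz, hw]
            · simp [hz, hw]
        _ = a + t * b := by
            rw [Finset.sum_add_distrib, ← ha]
            congr 1
            rw [hb, Finset.mul_sum]
            exact Finset.sum_congr rfl fun i _ => (Finset.mul_sum _ _ _).symm
    · calc ∑ i : Fin n, ∑ j, w (Fin.natAdd N i) * w j * (K (z (Fin.natAdd N i)) (z j))^2
          = ∑ i : Fin n, ((∑ j : Fin N, t * (K (x j) (s i))^2)
              + ∑ j : Fin n, (t * t) * (K (s i) (s j))^2) := by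
            refine Finset.sum_congr rfl fun i _ => ?_
            rw [Fin.sum_univ_add]
            congr 1
            · refine Finset.sum_congr rfl fun j _ => ?_
              simp [hz, hw, hsymm (s i) (x j)]
            · refine Finset.sum_congr rfl fun j _ => ?_
              simp [hz, hw]
        _ = t * b + t * t * c := by
            rw [Finset.sum_add_distrib]
            congr 1
            · rw [Finset.sum_comm, hb, Finset.mul_sum]
              exact Finset.sum_congr rfl fun i _ => (Finset.mul_sum _ _ _).symm
            · rw [hc, Finset.mul_sum]
              exact Finset.sum_congr rfl fun i _ => (Finset.mul_sum _ _ _).symm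
  rw [hsplit] at hQ
  have key : 0 ≤ a - b^2 / c := by
    have h1 : t * b = -(b^2/c) := by rw [ht]; ring
    have h2 : t * t * c = b^2/c := by
      rw [ht]; field_simp
    rw [h1, h2] at hQ
    linarith
  exact key
end

section
/- Under conditions (i)–(iii) of the Lipschitz theorem, every first-order partial derivative of c_S = (Σ_{i=1}^N Σ_{j=1}^n K²(x_i,s_j))/‖K_S‖_F² with respect to a landmark-point coordinate is bounded: |∂_{[s_k]_l} c_S| ≤ (M_1/(nα))·(N + (2n−1)C_0), where C_0 = ‖K‖_F/√(nα). -/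
noncomputable section

def sqKer {d : ℕ} (K : (Fin d → ℝ) → (Fin d → ℝ) → ℝ)
    (x y : Fin d → ℝ) : ℝ := (K x y)^2

/-- `∂^{[l]}_{[x]_l} K²(x, y)`. -/
def dLeft {d : ℕ} (K : (Fin d → ℝ) → (Fin d → ℝ) → ℝ)
    (x y : Fin d → ℝ) (l : Fin d) : ℝ :=
  deriv (fun t => sqKer K (Function.update x l t) y) (x l)

/-- `∂^{[d]}_{[x]_l} K²(x, x)`. -/
def dDiag {d : ℕ} (K : (Fin d → ℝ) → (Fin d → ℝ) → ℝ)
    (x : Fin d → ℝ) (l : Fin d) : ℝ :=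
  deriv (fun t => sqKer K (Function.update x l t) (Function.update x l t)) (x l)

/-- `c_S` as a function of the Nyström sample. -/
def cFun {d N n : ℕ} (K : (Fin d → ℝ) → (Fin d → ℝ) → ℝ)
    (x : Fin N → (Fin d → ℝ)) (S : Fin n → (Fin d → ℝ)) : ℝ :=
  (∑ i : Fin N, ∑ j : Fin n, sqKer K (x i) (S j)) /
    (∑ j : Fin n, ∑ j' : Fin n, sqKer K (S j) (S j'))

private lemma sqKer_nonneg {d : ℕ} (K : (Fin d → ℝ) → (Fin d → ℝ) → ℝ)
    (a b : Fin d → ℝ) : 0 ≤ sqKer K a b := sq_nonneg _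

private lemma sqKer_symm {d : ℕ} (K : (Fin d → ℝ) → (Fin d → ℝ) → ℝ)
    (hsymm : ∀ y z, K y z = K z y) (a b : Fin d → ℝ) : sqKer K a b = sqKer K b a := by
  simp [sqKer, hsymm a b]

private lemma diff_update {d : ℕ} (b : Fin d → ℝ) (l : Fin d) :
    Differentiable ℝ (fun t : ℝ => Function.update b l t) := by
  rw [differentiable_pi]
  intro m
  by_cases h : m = l
  · subst h
    simp [Function.update_apply]
  · simp only [Function.update_apply, h, if_false]
    exact differentiable_const _

private lemma diff_sqKer2 {d : ℕ} {K : (Fin d → ℝ) → (Fin d → ℝ) → ℝ}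
    (hK : ContDiff ℝ 2 (fun p : (Fin d → ℝ) × (Fin d → ℝ) => K p.1 p.2))
    {φ ψ : ℝ → Fin d → ℝ} (hφ : Differentiable ℝ φ) (hψ : Differentiable ℝ ψ) :
    Differentiable ℝ (fun t => sqKer K (φ t) (ψ t)) := by
  have hKd : Differentiable ℝ (fun p : (Fin d → ℝ) × (Fin d → ℝ) => K p.1 p.2) :=
    hK.differentiable (by norm_num)
  have h1 : Differentiable ℝ (fun t => K (φ t) (ψ t)) := hKd.comp (hφ.prodMk hψ)
  simpa [sqKer] using h1.fun_pow 2

private lemma sum_mul_sum_eq {ι κ₁ κ₂ : Type*} [Fintype ι] [Fintype κ₁] [Fintype κ₂]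
    (f : ι → κ₁ → ℝ) (g : ι → κ₂ → ℝ) :
    ∑ r : ι, ∑ s : ι, (∑ i, f r i * f s i) * (∑ j, g r j * g s j)
      = ∑ i : κ₁, ∑ j : κ₂, (∑ r, f r i * g r j)^2 := by
  have swap4 : ∀ (F : ι → ι → κ₁ → κ₂ → ℝ),
      (∑ r, ∑ s, ∑ i, ∑ j, F r s i j) = ∑ i, ∑ j, ∑ r, ∑ s, F r s i j := by
    intro F
    calc (∑ r, ∑ s, ∑ i, ∑ j, F r s i j)
        = ∑ r, ∑ i, ∑ s, ∑ j, F r s i j :=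
          Finset.sum_congr rfl fun r _ => by rw [Finset.sum_comm]
      _ = ∑ i, ∑ r, ∑ s, ∑ j, F r s i j := by rw [Finset.sum_comm]
      _ = ∑ i, ∑ r, ∑ j, ∑ s, F r s i j :=
          Finset.sum_congr rfl fun i _ => Finset.sum_congr rfl fun r _ => by
            rw [Finset.sum_comm]
      _ = ∑ i, ∑ j, ∑ r, ∑ s, F r s i j :=
          Finset.sum_congr rfl fun i _ => by rw [Finset.sum_comm]
  calc ∑ r : ι, ∑ s : ι, (∑ i, f r i * f s i) * (∑ j, g r j * g s j)
      = ∑ r, ∑ s, ∑ i, ∑ j, (f r i * f s i) * (g r j * g s j) := by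
        simp_rw [Finset.sum_mul_sum]
    _ = ∑ i, ∑ j, ∑ r, ∑ s, (f r i * f s i) * (g r j * g s j) := swap4 _
    _ = ∑ i : κ₁, ∑ j : κ₂, (∑ r, f r i * g r j)^2 := by
        simp_rw [pow_two, Finset.sum_mul_sum]
        exact Finset.sum_congr rfl fun i _ => Finset.sum_congr rfl fun j _ =>
          Finset.sum_congr rfl fun r _ => Finset.sum_congr rfl fun s _ => by ring


private lemma arith_bound (a Gv Fv R dF dG M1 Nr c : ℝ)
    (ha : 0 < a) (hGa : a ≤ Gv) (hF0 : 0 ≤ Fv) (hFR : Fv ≤ R * Real.sqrt Gv)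
    (hR : 0 ≤ R) (hM1 : 0 < M1) (hNr : 0 ≤ Nr) (hc : 0 ≤ c)
    (hdF : |dF| ≤ Nr * M1) (hdG : |dG| ≤ c * M1) :
    |(dF * Gv - Fv * dG) / Gv ^ 2| ≤ (M1 / a) * (Nr + c * (R / Real.sqrt a)) := by
  have hGv : 0 < Gv := lt_of_lt_of_le ha hGa
  have hsgv : Real.sqrt Gv * Real.sqrt Gv = Gv := Real.mul_self_sqrt hGv.le
  have hsa : Real.sqrt a * Real.sqrt a = a := Real.mul_self_sqrt ha.le
  have hsgpos : 0 < Real.sqrt Gv := Real.sqrt_pos.mpr hGv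
  have hsapos : 0 < Real.sqrt a := Real.sqrt_pos.mpr ha
  have hsale : Real.sqrt a ≤ Real.sqrt Gv := Real.sqrt_le_sqrt hGa
  have hnum : |dF * Gv - Fv * dG| ≤ Nr * M1 * Gv + (R * Real.sqrt Gv) * (c * M1) := by
    calc |dF * Gv - Fv * dG| ≤ |dF * Gv| + |Fv * dG| := abs_sub _ _
      _ = |dF| * Gv + Fv * |dG| := by
          rw [abs_mul, abs_mul, abs_of_pos hGv, abs_of_nonneg hF0]
      _ ≤ Nr * M1 * Gv + (R * Real.sqrt Gv) * (c * M1) := by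
          refine add_le_add (mul_le_mul_of_nonneg_right hdF hGv.le) ?_
          exact mul_le_mul hFR hdG (abs_nonneg _) (by positivity)
  have p1 : Nr * M1 * Gv / Gv ^ 2 ≤ Nr * M1 / a := by
    rw [pow_two, mul_div_mul_right _ _ (ne_of_gt hGv)]
    have h1g := one_div_le_one_div_of_le ha hGa
    calc Nr * M1 / Gv = Nr * M1 * (1 / Gv) := by ring
      _ ≤ Nr * M1 * (1 / a) := mul_le_mul_of_nonneg_left h1g (mul_nonneg hNr hM1.le)
      _ = Nr * M1 / a := by ring
  have p2 : (R * Real.sqrt Gv) * (c * M1) / Gv ^ 2 ≤ (c * M1 * R) / (a * Real.sqrt a) := by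
    rw [div_le_div_iff₀ (by positivity) (by positivity)]
    have h4 : a * Real.sqrt a ≤ Gv * Real.sqrt Gv :=
      mul_le_mul hGa hsale hsapos.le hGv.le
    calc R * Real.sqrt Gv * (c * M1) * (a * Real.sqrt a)
        = c * M1 * R * Real.sqrt Gv * (a * Real.sqrt a) := by ring
      _ ≤ c * M1 * R * Real.sqrt Gv * (Gv * Real.sqrt Gv) :=
          mul_le_mul_of_nonneg_left h4 (by positivity)
      _ = c * M1 * R * Gv ^ 2 := by linear_combination (c * M1 * R * Gv) * hsgv
  calc |(dF * Gv - Fv * dG) / Gv ^ 2|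
      = |dF * Gv - Fv * dG| / Gv ^ 2 := by rw [abs_div, abs_of_pos (pow_pos hGv 2)]
    _ ≤ (Nr * M1 * Gv + (R * Real.sqrt Gv) * (c * M1)) / Gv ^ 2 :=
        (div_le_div_iff_of_pos_right (by positivity)).mpr hnum
    _ = Nr * M1 * Gv / Gv ^ 2 + (R * Real.sqrt Gv) * (c * M1) / Gv ^ 2 := add_div _ _ _
    _ ≤ Nr * M1 / a + (c * M1 * R) / (a * Real.sqrt a) := add_le_add p1 p2
    _ = (M1 / a) * (Nr + c * (R / Real.sqrt a)) := by
        field_simp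

private lemma gram_cs {d N n : ℕ} (K : (Fin d → ℝ) → (Fin d → ℝ) → ℝ)
    (hsymm : ∀ y z, K y z = K z y)
    (hpsd : ∀ (m : ℕ) (z : Fin m → (Fin d → ℝ)) (c : Fin m → ℝ),
      0 ≤ ∑ i, ∑ j, c i * c j * K (z i) (z j))
    (x : Fin N → (Fin d → ℝ)) (s : Fin n → (Fin d → ℝ)) :
    ∑ i, ∑ j, sqKer K (x i) (s j) ≤
      Real.sqrt (∑ i, ∑ i', sqKer K (x i) (x i')) *
      Real.sqrt (∑ j, ∑ j', sqKer K (s j) (s j')) := by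
  classical
  set z : Fin (N + n) → (Fin d → ℝ) := Fin.append x s with hz
  set A : Matrix (Fin (N + n)) (Fin (N + n)) ℝ := Matrix.of fun u v => K (z u) (z v) with hA
  have hApsd : A.PosSemidef := by
    rw [Matrix.posSemidef_iff_dotProduct_mulVec]
    constructor
    · ext u v
      simp [hA, Matrix.conjTranspose_apply, hsymm (z v) (z u)]
    · intro c
      have h2 : dotProduct (star c) (A.mulVec c)
          = ∑ i, ∑ j, c i * c j * K (z i) (z j) := by
        simp only [dotProduct, Matrix.mulVec, hA, Matrix.of_apply, Pi.star_apply,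
          star_trivial, Finset.mul_sum]
        exact Finset.sum_congr rfl fun u _ => Finset.sum_congr rfl fun v _ => by
          ring
      rw [h2]
      exact hpsd _ z c
  obtain ⟨B, hB⟩ : ∃ B : Matrix (Fin (N + n)) (Fin (N + n)) ℝ, A = B.conjTranspose * B := by
    open scoped MatrixOrder in exact CStarAlgebra.nonneg_iff_eq_star_mul_self.mp hApsd.nonneg
  have hAentry : ∀ u v, K (z u) (z v) = ∑ r, B r u * B r v := by
    intro u v
    have h3 : A u v = (B.conjTranspose * B) u v := by rw [← hB]
    simpa [hA, Matrix.mul_apply, Matrix.conjTranspose_apply] using h3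
  set p : Fin (N + n) × Fin (N + n) → ℝ :=
    fun rs => ∑ i : Fin N, B rs.1 (Fin.castAdd n i) * B rs.2 (Fin.castAdd n i) with hp
  set q : Fin (N + n) × Fin (N + n) → ℝ :=
    fun rs => ∑ j : Fin n, B rs.1 (Fin.natAdd N j) * B rs.2 (Fin.natAdd N j) with hq
  have key1 : (∑ rs : Fin (N + n) × Fin (N + n), p rs * q rs)
      = ∑ i, ∑ j, sqKer K (x i) (s j) := by
    rw [Fintype.sum_prod_type]
    rw [show (∑ r : Fin (N+n), ∑ s' : Fin (N+n), p (r, s') * q (r, s'))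
      = ∑ r : Fin (N+n), ∑ s' : Fin (N+n),
        (∑ i : Fin N, (fun r i => B r (Fin.castAdd n i)) r i * (fun r i => B r (Fin.castAdd n i)) s' i) *
        (∑ j : Fin n, (fun r j => B r (Fin.natAdd N j)) r j * (fun r j => B r (Fin.natAdd N j)) s' j) from rfl]
    rw [sum_mul_sum_eq]
    refine Finset.sum_congr rfl fun i _ => Finset.sum_congr rfl fun j _ => ?_
    rw [← hAentry]
    simp [sqKer, hz, Fin.append_left, Fin.append_right]
  have key2 : (∑ rs : Fin (N + n) × Fin (N + n), p rs ^ 2)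
      = ∑ i, ∑ i', sqKer K (x i) (x i') := by
    rw [Fintype.sum_prod_type]
    simp_rw [pow_two]
    rw [show (∑ r : Fin (N+n), ∑ s' : Fin (N+n), p (r, s') * p (r, s'))
      = ∑ r : Fin (N+n), ∑ s' : Fin (N+n),
        (∑ i : Fin N, (fun r i => B r (Fin.castAdd n i)) r i * (fun r i => B r (Fin.castAdd n i)) s' i) *
        (∑ j : Fin N, (fun r j => B r (Fin.castAdd n j)) r j * (fun r j => B r (Fin.castAdd n j)) s' j) from rfl]
    rw [sum_mul_sum_eq]
    refine Finset.sum_congr rfl fun i _ => Finset.sum_congr rfl fun j _ => ?_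
    rw [← hAentry]
    simp [sqKer, hz, Fin.append_left]
  have key3 : (∑ rs : Fin (N + n) × Fin (N + n), q rs ^ 2)
      = ∑ j, ∑ j', sqKer K (s j) (s j') := by
    rw [Fintype.sum_prod_type]
    simp_rw [pow_two]
    rw [show (∑ r : Fin (N+n), ∑ s' : Fin (N+n), q (r, s') * q (r, s'))
      = ∑ r : Fin (N+n), ∑ s' : Fin (N+n),
        (∑ i : Fin n, (fun r i => B r (Fin.natAdd N i)) r i * (fun r i => B r (Fin.natAdd N i)) s' i) *
        (∑ j : Fin n, (fun r j => B r (Fin.natAdd N j)) r j * (fun r j => B r (Fin.natAdd N j)) s' j) from rfl]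
    rw [sum_mul_sum_eq]
    refine Finset.sum_congr rfl fun i _ => Finset.sum_congr rfl fun j _ => ?_
    rw [← hAentry]
    simp [sqKer, hz, Fin.append_right]
  have hpq0 : 0 ≤ ∑ rs : Fin (N + n) × Fin (N + n), p rs * q rs := by
    rw [key1]
    exact Finset.sum_nonneg fun i _ => Finset.sum_nonneg fun j _ => sq_nonneg _
  have hcs := Finset.sum_mul_sq_le_sq_mul_sq Finset.univ p q
  calc ∑ i, ∑ j, sqKer K (x i) (s j)
      = ∑ rs : Fin (N + n) × Fin (N + n), p rs * q rs := key1.symm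
    _ = Real.sqrt ((∑ rs : Fin (N + n) × Fin (N + n), p rs * q rs) ^ 2) :=
        (Real.sqrt_sq hpq0).symm
    _ ≤ Real.sqrt ((∑ rs : Fin (N + n) × Fin (N + n), p rs ^ 2) *
          (∑ rs : Fin (N + n) × Fin (N + n), q rs ^ 2)) := Real.sqrt_le_sqrt hcs
    _ = Real.sqrt (∑ rs : Fin (N + n) × Fin (N + n), p rs ^ 2) *
          Real.sqrt (∑ rs : Fin (N + n) × Fin (N + n), q rs ^ 2) :=
        Real.sqrt_mul (Finset.sum_nonneg fun _ _ => sq_nonneg _) _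
    _ = _ := by rw [key2, key3]

/-- bound on the partial derivatives of `c_S`. -/
theorem cFun_partial_deriv_bound {d N n : ℕ} (hn : 0 < n)
    (K : (Fin d → ℝ) → (Fin d → ℝ) → ℝ)
    (hK : ContDiff ℝ 2 (fun p : (Fin d → ℝ) × (Fin d → ℝ) => K p.1 p.2))
    (hsymm : ∀ y z, K y z = K z y)
    (hpsd : ∀ (m : ℕ) (z : Fin m → (Fin d → ℝ)) (c : Fin m → ℝ),
      0 ≤ ∑ i, ∑ j, c i * c j * K (z i) (z j))
    (x : Fin N → (Fin d → ℝ)) (α M1 : ℝ) (hα : 0 < α) (hM1 : 0 < M1)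
    (hdiag : ∀ y : Fin d → ℝ, α ≤ sqKer K y y)
    (hfirst : ∀ (y z : Fin d → ℝ) (l : Fin d),
      |dDiag K y l| ≤ M1 ∧ |dLeft K y z l| ≤ M1)
    (s : Fin n → (Fin d → ℝ)) (k : Fin n) (l : Fin d) :
    |deriv (fun t => cFun K x (Function.update s k (Function.update (s k) l t)))
        (s k l)| ≤
      (M1 / ((n : ℝ) * α)) *
        ((N : ℝ) + (2 * (n : ℝ) - 1) *
          (Real.sqrt (∑ i, ∑ i', sqKer K (x i) (x i')) /
            Real.sqrt ((n : ℝ) * α))) := by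
  classical
  have hkey0 : Function.update s k (Function.update (s k) l (s k l)) = s := by
    simp [Function.update_eq_self]
  -- differentiability of the coordinates of the perturbed sample
  have hSd : ∀ j : Fin n,
      Differentiable ℝ (fun t => Function.update s k (Function.update (s k) l t) j) := by
    intro j
    by_cases h : j = k
    · subst h
      simp only [Function.update_self]
      exact diff_update _ _
    · simp only [Function.update_of_ne h]
      exact differentiable_const _
  have hFterm : ∀ (i : Fin N) (j : Fin n), Differentiable ℝ
      (fun t => sqKer K (x i) (Function.update s k (Function.update (s k) l t) j)) :=
    fun i j => diff_sqKer2 hK (differentiable_const _) (hSd j)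
  have hGterm : ∀ (j j' : Fin n), Differentiable ℝ
      (fun t => sqKer K (Function.update s k (Function.update (s k) l t) j)
        (Function.update s k (Function.update (s k) l t) j')) :=
    fun j j' => diff_sqKer2 hK (hSd j) (hSd j')
  have hFdiff : Differentiable ℝ (fun t => ∑ i : Fin N, ∑ j : Fin n,
      sqKer K (x i) (Function.update s k (Function.update (s k) l t) j)) :=
    Differentiable.fun_sum fun i _ => Differentiable.fun_sum fun j _ => hFterm i j
  have hGdiff : Differentiable ℝ (fun t => ∑ j : Fin n, ∑ j' : Fin n,
      sqKer K (Function.update s k (Function.update (s k) l t) j)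
        (Function.update s k (Function.update (s k) l t) j')) :=
    Differentiable.fun_sum fun j _ => Differentiable.fun_sum fun j' _ => hGterm j j'
  -- pointwise derivative bounds
  have hFbnd : ∀ (i : Fin N) (j : Fin n),
      |deriv (fun t => sqKer K (x i) (Function.update s k (Function.update (s k) l t) j))
        (s k l)| ≤ if j = k then M1 else 0 := by
    intro i j
    by_cases h : j = k
    ·
      have he : (fun t => sqKer K (x i) (Function.update s k (Function.update (s k) l t) j))
          = fun t => sqKer K (Function.update (s k) l t) (x i) := by
        funext t
        rw [h, Function.update_self, sqKer_symm K hsymm]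
      rw [he, if_pos h]
      exact (hfirst (s k) (x i) l).2
    · simp only [Function.update_of_ne h, if_neg h, deriv_const', abs_zero, le_refl]
  have hGbnd : ∀ (j j' : Fin n),
      |deriv (fun t => sqKer K (Function.update s k (Function.update (s k) l t) j)
        (Function.update s k (Function.update (s k) l t) j')) (s k l)| ≤
        ((if j = k then M1 else 0) + (if j' = k then M1 else 0)
          - if j = k then (if j' = k then M1 else 0) else 0) := by
    intro j j'
    by_cases h : j = k
    · by_cases h' : j' = k
      · have he : (fun t => sqKer K (Function.update s k (Function.update (s k) l t) j)
            (Function.update s k (Function.update (s k) l t) j'))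
            = fun t => sqKer K (Function.update (s k) l t) (Function.update (s k) l t) := by
          funext t
          rw [h, h', Function.update_self]
        rw [he, if_pos h', if_pos h]
        rw [show M1 + M1 - M1 = M1 by ring]
        exact (hfirst (s k) (s k) l).1
      · have he : (fun t => sqKer K (Function.update s k (Function.update (s k) l t) j)
            (Function.update s k (Function.update (s k) l t) j'))
            = fun t => sqKer K (Function.update (s k) l t) (s j') := by
          funext t
          rw [h, Function.update_self, Function.update_of_ne h']
        rw [he, if_neg h', if_pos h, if_pos h]
        rw [show M1 + 0 - 0 = M1 by ring]
        exact (hfirst (s k) (s j') l).2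
    · by_cases h' : j' = k
      · have he : (fun t => sqKer K (Function.update s k (Function.update (s k) l t) j)
            (Function.update s k (Function.update (s k) l t) j'))
            = fun t => sqKer K (Function.update (s k) l t) (s j) := by
          funext t
          rw [h', Function.update_self, Function.update_of_ne h, sqKer_symm K hsymm]
        rw [he, if_pos h', if_neg h]
        rw [show (0 : ℝ) + M1 - 0 = M1 by ring]
        exact (hfirst (s k) (s j) l).2
      · have he : (fun t => sqKer K (Function.update s k (Function.update (s k) l t) j)
            (Function.update s k (Function.update (s k) l t) j'))
            = fun _ => sqKer K (s j) (s j') := by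
          funext t
          rw [Function.update_of_ne h, Function.update_of_ne h']
        rw [he, if_neg h, if_neg h', if_neg h, deriv_const']
        norm_num
  -- the derivatives of the numerator and denominator
  have hdF : deriv (fun t => ∑ i : Fin N, ∑ j : Fin n,
      sqKer K (x i) (Function.update s k (Function.update (s k) l t) j)) (s k l)
      = ∑ i : Fin N, ∑ j : Fin n, deriv (fun t =>
          sqKer K (x i) (Function.update s k (Function.update (s k) l t) j)) (s k l) := by
    rw [deriv_fun_sum fun i _ => (Differentiable.fun_sum fun j _ => hFterm i j).differentiableAt]
    exact Finset.sum_congr rfl fun i _ => deriv_fun_sum fun j _ => (hFterm i j).differentiableAt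
  have hdG : deriv (fun t => ∑ j : Fin n, ∑ j' : Fin n,
      sqKer K (Function.update s k (Function.update (s k) l t) j)
        (Function.update s k (Function.update (s k) l t) j')) (s k l)
      = ∑ j : Fin n, ∑ j' : Fin n, deriv (fun t =>
          sqKer K (Function.update s k (Function.update (s k) l t) j)
            (Function.update s k (Function.update (s k) l t) j')) (s k l) := by
    rw [deriv_fun_sum fun j _ => (Differentiable.fun_sum fun j' _ => hGterm j j').differentiableAt]
    exact Finset.sum_congr rfl fun j _ => deriv_fun_sum fun j' _ => (hGterm j j').differentiableAt
  have hFabs : |deriv (fun t => ∑ i : Fin N, ∑ j : Fin n,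
      sqKer K (x i) (Function.update s k (Function.update (s k) l t) j)) (s k l)|
      ≤ (N : ℝ) * M1 := by
    rw [hdF]
    calc |∑ i : Fin N, ∑ j : Fin n, deriv (fun t =>
            sqKer K (x i) (Function.update s k (Function.update (s k) l t) j)) (s k l)|
        ≤ ∑ i : Fin N, |∑ j : Fin n, deriv (fun t =>
            sqKer K (x i) (Function.update s k (Function.update (s k) l t) j)) (s k l)| :=
          Finset.abs_sum_le_sum_abs _ _
      _ ≤ ∑ _i : Fin N, M1 := by
          refine Finset.sum_le_sum fun i _ => ?_
          calc |∑ j : Fin n, deriv (fun t =>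
                  sqKer K (x i) (Function.update s k (Function.update (s k) l t) j)) (s k l)|
              ≤ ∑ j : Fin n, |deriv (fun t =>
                  sqKer K (x i) (Function.update s k (Function.update (s k) l t) j)) (s k l)| :=
                Finset.abs_sum_le_sum_abs _ _
            _ ≤ ∑ j : Fin n, if j = k then M1 else 0 :=
                Finset.sum_le_sum fun j _ => hFbnd i j
            _ = M1 := by simp
      _ = (N : ℝ) * M1 := by simp [mul_comm]
  have hGabs : |deriv (fun t => ∑ j : Fin n, ∑ j' : Fin n,
      sqKer K (Function.update s k (Function.update (s k) l t) j)
        (Function.update s k (Function.update (s k) l t) j')) (s k l)|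
      ≤ (2 * (n : ℝ) - 1) * M1 := by
    rw [hdG]
    have hsum : ∑ j : Fin n, ∑ j' : Fin n,
        ((if j = k then M1 else 0) + (if j' = k then M1 else 0)
          - if j = k then (if j' = k then M1 else 0) else 0)
        = 2 * (n : ℝ) * M1 - M1 := by
      simp [Finset.sum_add_distrib, Finset.sum_sub_distrib, Finset.sum_ite_eq',
        Finset.sum_const, Finset.card_univ, nsmul_eq_mul]
      ring
    calc |∑ j : Fin n, ∑ j' : Fin n, deriv (fun t =>
            sqKer K (Function.update s k (Function.update (s k) l t) j)
              (Function.update s k (Function.update (s k) l t) j')) (s k l)|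
        ≤ ∑ j : Fin n, ∑ j' : Fin n, |deriv (fun t =>
            sqKer K (Function.update s k (Function.update (s k) l t) j)
              (Function.update s k (Function.update (s k) l t) j')) (s k l)| := by
          refine le_trans (Finset.abs_sum_le_sum_abs _ _) ?_
          exact Finset.sum_le_sum fun j _ => Finset.abs_sum_le_sum_abs _ _
      _ ≤ ∑ j : Fin n, ∑ j' : Fin n,
            ((if j = k then M1 else 0) + (if j' = k then M1 else 0)
              - if j = k then (if j' = k then M1 else 0) else 0) :=
          Finset.sum_le_sum fun j _ => Finset.sum_le_sum fun j' _ => hGbnd j j'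
      _ = 2 * (n : ℝ) * M1 - M1 := hsum
      _ = (2 * (n : ℝ) - 1) * M1 := by ring
  -- lower bound for the denominator
  have hGvlb : (n : ℝ) * α ≤ ∑ j : Fin n, ∑ j' : Fin n, sqKer K (s j) (s j') := by
    calc (n : ℝ) * α = ∑ _j : Fin n, α := by simp [mul_comm]
      _ ≤ ∑ j : Fin n, sqKer K (s j) (s j) := Finset.sum_le_sum fun j _ => hdiag (s j)
      _ ≤ ∑ j : Fin n, ∑ j' : Fin n, sqKer K (s j) (s j') :=
          Finset.sum_le_sum fun j _ =>
            Finset.single_le_sum (f := fun j' => sqKer K (s j) (s j'))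
              (fun j' _ => sqKer_nonneg K _ _) (Finset.mem_univ j)
  have hna : 0 < (n : ℝ) * α := by
    have : (0 : ℝ) < n := by exact_mod_cast hn
    positivity
  have hGvpos : (0 : ℝ) < ∑ j : Fin n, ∑ j' : Fin n, sqKer K (s j) (s j') :=
    lt_of_lt_of_le hna hGvlb
  have hFv0 : (0 : ℝ) ≤ ∑ i : Fin N, ∑ j : Fin n, sqKer K (x i) (s j) :=
    Finset.sum_nonneg fun i _ => Finset.sum_nonneg fun j _ => sqKer_nonneg K _ _
  have hcs := gram_cs K hsymm hpsd x s
  have h2n : (0 : ℝ) ≤ 2 * (n : ℝ) - 1 := by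
    have : (1 : ℝ) ≤ (n : ℝ) := by exact_mod_cast hn
    linarith
  show |deriv (fun t =>
      (∑ i : Fin N, ∑ j : Fin n,
        sqKer K (x i) (Function.update s k (Function.update (s k) l t) j)) /
      (∑ j : Fin n, ∑ j' : Fin n,
        sqKer K (Function.update s k (Function.update (s k) l t) j)
          (Function.update s k (Function.update (s k) l t) j'))) (s k l)| ≤ _
  have hGne : (∑ j : Fin n, ∑ j' : Fin n,
      sqKer K (Function.update s k (Function.update (s k) l (s k l)) j)
        (Function.update s k (Function.update (s k) l (s k l)) j')) ≠ 0 := by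
    rw [hkey0]
    exact ne_of_gt hGvpos
  rw [deriv_fun_div (hFdiff (s k l)) (hGdiff (s k l)) hGne]
  rw [hkey0]
  exact arith_bound _ _ _ _ _ _ _ _ _ hna hGvlb hFv0 hcs (Real.sqrt_nonneg _) hM1
    (Nat.cast_nonneg N) h2n hFabs hGabs

end
end
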